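/- Write μ = μ₁μ₂φ₃ with φ₃ a positive integer (this is possible since μ₁μ₂ divides μ). Then gcd(μ₁,μ₂) divides μ₃ and μ₃ divides gcd(μ₁,μ₂)·φ₃; as a consequence, gcd(μ₁,μ₂,μ₃) = gcd(μ₁,μ₂). (The same holds for the other two combinations of two out of the three multiplicities μ₁, μ₂, μ₃.) -/

import Mathlib

noncomputable section

/-- The coercion of an integer vector in `ℤ³` to `ℝ³`. -/
def coe3 (v : Fin 3 → ℤ) : Fin 3 → ℝ := fun i => (v i : ℝ)

/-- A vector of `ℤ³` is primitive if the greatest common divisor of its components is 1. -/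
def IsPrimitive (v : Fin 3 → ℤ) : Prop := Int.gcd (v 0) (Int.gcd (v 1) (v 2)) = 1

/-- The fundamental parallelepiped spanned by two vectors:
`◊(a,b) = {s•a + t•b : s,t ∈ [0,1)}`. -/
def para2 (a b : Fin 3 → ℝ) : Set (Fin 3 → ℝ) :=
  {x | ∃ s t : ℝ, 0 ≤ s ∧ s < 1 ∧ 0 ≤ t ∧ t < 1 ∧ x = s • a + t • b}

/-- The fundamental parallelepiped spanned by three vectors:
`◊(a,b,c) = {s•a + t•b + u•c : s,t,u ∈ [0,1)}`. -/
def para3 (a b c : Fin 3 → ℝ) : Set (Fin 3 → ℝ) :=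
  {x | ∃ s t u : ℝ, 0 ≤ s ∧ s < 1 ∧ 0 ≤ t ∧ t < 1 ∧ 0 ≤ u ∧ u < 1 ∧
    x = s • a + t • b + u • c}

/-- The integral points `ℤ³ ∩ ◊(a,b)` of a two-dimensional fundamental parallelepiped. -/
def H2pts (a b : Fin 3 → ℤ) : Set (Fin 3 → ℤ) := {x | coe3 x ∈ para2 (coe3 a) (coe3 b)}

/-- The integral points `ℤ³ ∩ ◊(a,b,c)` of a three-dimensional fundamental parallelepiped. -/
def H3pts (a b c : Fin 3 → ℤ) : Set (Fin 3 → ℤ) :=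
  {x | coe3 x ∈ para3 (coe3 a) (coe3 b) (coe3 c)}



/-- The integer cross product of two vectors in `ℤ³`. -/
def crossZ (a b : Fin 3 → ℤ) : Fin 3 → ℤ :=
  ![a 1 * b 2 - a 2 * b 1, a 2 * b 0 - a 0 * b 2, a 0 * b 1 - a 1 * b 0]

/-- The gcd of the `2×2` minors of the pair `(a,b)`. -/
def gg (a b : Fin 3 → ℤ) : ℕ :=
  Int.gcd (crossZ a b 0) (Int.gcd (crossZ a b 1) (crossZ a b 2))

lemma bezout3 (x y z : ℤ) : ∃ p q r : ℤ,
    p * x + q * y + r * z = Int.gcd x (Int.gcd y z) := by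
  have h1 := Int.gcd_eq_gcd_ab x (Int.gcd y z)
  have h2 := Int.gcd_eq_gcd_ab y z
  exact ⟨Int.gcdA x (Int.gcd y z), Int.gcdB x (Int.gcd y z) * Int.gcdA y z,
    Int.gcdB x (Int.gcd y z) * Int.gcdB y z, by rw [h1, h2]; ring⟩

lemma gg_dvd_minor (a b : Fin 3 → ℤ) (i j : Fin 3) :
    (gg a b : ℤ) ∣ a i * b j - a j * b i := by
  have h0 : (gg a b : ℤ) ∣ a 1 * b 2 - a 2 * b 1 := Int.gcd_dvd_left _ _
  have h1 : (gg a b : ℤ) ∣ a 2 * b 0 - a 0 * b 2 :=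
    dvd_trans (Int.gcd_dvd_right _ _) (Int.gcd_dvd_left _ _)
  have h2 : (gg a b : ℤ) ∣ a 0 * b 1 - a 1 * b 0 :=
    dvd_trans (Int.gcd_dvd_right _ _) (Int.gcd_dvd_right _ _)
  fin_cases i <;> fin_cases j <;>
    first
      | simpa using dvd_zero (gg a b : ℤ)
      | exact h0 | exact h1 | exact h2
      | exact dvd_sub_comm.mp h0 | exact dvd_sub_comm.mp h1 | exact dvd_sub_comm.mp h2

/-- Key elimination: if `d` divides all minors of `(u,w)` and `(v,w)` and `w` is
primitive, then `d` divides all minors of `(u,v)`. -/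
lemma minor_transfer (u v w : Fin 3 → ℤ) (hw : IsPrimitive w) (d : ℤ)
    (h1 : ∀ i j, d ∣ u i * w j - u j * w i) (h2 : ∀ i j, d ∣ v i * w j - v j * w i) :
    ∀ i j, d ∣ u i * v j - u j * v i := by
  obtain ⟨p, q, r, hpqr⟩ := bezout3 (w 0) (w 1) (w 2)
  rw [hw] at hpqr; push_cast at hpqr
  set lam := p * u 0 + q * u 1 + r * u 2 with hlam
  set rho := p * v 0 + q * v 1 + r * v 2 with hrho
  have hu : ∀ j, d ∣ lam * w j - u j := by
    intro j
    have e : lam * w j - u j = (p * (u 0 * w j - u j * w 0) + q * (u 1 * w j - u j * w 1)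
        + r * (u 2 * w j - u j * w 2)) + u j * (p * w 0 + q * w 1 + r * w 2 - 1) := by
      rw [hlam]; ring
    rw [e, hpqr]
    simpa using (((h1 0 j).mul_left p).add ((h1 1 j).mul_left q)).add ((h1 2 j).mul_left r)
  have hv : ∀ j, d ∣ rho * w j - v j := by
    intro j
    have e : rho * w j - v j = (p * (v 0 * w j - v j * w 0) + q * (v 1 * w j - v j * w 1)
        + r * (v 2 * w j - v j * w 2)) + v j * (p * w 0 + q * w 1 + r * w 2 - 1) := by
      rw [hrho]; ring
    rw [e, hpqr]
    simpa using (((h2 0 j).mul_left p).add ((h2 1 j).mul_left q)).add ((h2 2 j).mul_left r)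
  intro i j
  have e : u i * v j - u j * v i =
      (-(lam * w i)) * (rho * w j - v j) + (lam * w j) * (rho * w i - v i)
      + (-(rho * w j)) * (lam * w i - u i) + (rho * w i) * (lam * w j - u j)
      + (lam * w i - u i) * (rho * w j - v j)
      + (-(lam * w j - u j)) * (rho * w i - v i) := by ring
  rw [e]
  refine dvd_add (dvd_add (dvd_add (dvd_add (dvd_add ?_ ?_) ?_) ?_) ?_) ?_
  · exact (hv j).mul_left _
  · exact (hv i).mul_left _
  · exact (hu i).mul_left _
  · exact (hu j).mul_left _
  · exact (hv j).mul_left _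
  · exact (hv i).mul_left _

lemma gg_pos (a b : Fin 3 → ℤ) (hpa : IsPrimitive a)
    (hli : LinearIndependent ℝ ![coe3 a, coe3 b]) : 0 < gg a b := by
  rcases Nat.eq_zero_or_pos (gg a b) with h | h
  · exfalso
    rw [gg, Int.gcd_eq_zero_iff] at h
    obtain ⟨h0, h12⟩ := h
    rw [Int.natCast_eq_zero, Int.gcd_eq_zero_iff] at h12
    obtain ⟨h1, h2⟩ := h12
    simp only [crossZ, Matrix.cons_val_zero, Matrix.cons_val_one, Matrix.head_cons,
      Matrix.cons_val_two, Matrix.tail_cons] at h0 h1 h2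
    have hminor : ∀ i j : Fin 3, a i * b j - a j * b i = 0 := by
      intro i j
      fin_cases i <;> fin_cases j <;>
        first
          | exact h0 | exact h1 | exact h2
          | exact sub_self _
          | (rw [sub_eq_zero]; exact (sub_eq_zero.mp h0).symm)
          | (rw [sub_eq_zero]; exact (sub_eq_zero.mp h1).symm)
          | (rw [sub_eq_zero]; exact (sub_eq_zero.mp h2).symm)
    -- a has a nonzero coordinate
    have hA : ∃ i, a i ≠ 0 := by
      by_contra hall
      push_neg at hall
      rw [IsPrimitive, hall 0, hall 1, hall 2] at hpa
      simp at hpa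
    obtain ⟨i, hi⟩ := hA
    have hdep : ((b i : ℝ)) • coe3 a + (-(a i : ℝ)) • coe3 b = 0 := by
      funext j
      have := hminor j i
      have : (a j : ℝ) * b i - a i * b j = 0 := by exact_mod_cast this
      simp only [coe3, Pi.add_apply, Pi.smul_apply, smul_eq_mul, Pi.zero_apply]
      linarith
    have := (LinearIndependent.pair_iff.mp hli _ _ hdep).2
    exact hi (by exact_mod_cast neg_eq_zero.mp this)
  · exact h

lemma ncard_H2pts (a b : Fin 3 → ℤ) (hpa : IsPrimitive a)
    (hli : LinearIndependent ℝ ![coe3 a, coe3 b]) :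
    (H2pts a b).ncard = gg a b := by
  have hg : 0 < gg a b := gg_pos a b hpa hli
  set g : ℕ := gg a b with hgdef
  have hgZ : (0:ℤ) < (g:ℤ) := by exact_mod_cast hg
  have hgR : (0:ℝ) < (g:ℝ) := by exact_mod_cast hg
  obtain ⟨p, q, r, hpqr⟩ := bezout3 (crossZ a b 0) (crossZ a b 1) (crossZ a b 2)
  have hpqr : p * crossZ a b 0 + q * crossZ a b 1 + r * crossZ a b 2 = (g:ℤ) := hpqr
  have hpqrR : (p:ℝ) * (crossZ a b 0 : ℤ) + (q:ℝ) * (crossZ a b 1 : ℤ)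
      + (r:ℝ) * (crossZ a b 2 : ℤ) = (g:ℝ) := by exact_mod_cast hpqr
  obtain ⟨p', q', r', hpqr'⟩ := bezout3 (a 0) (a 1) (a 2)
  rw [show Int.gcd (a 0) (Int.gcd (a 1) (a 2)) = 1 from hpa] at hpqr'
  push_cast at hpqr'
  set ν : ℤ := p' * b 0 + q' * b 1 + r' * b 2 with hν
  -- divisibility of ν * a j - b j
  have hν_dvd : ∀ j : Fin 3, (g:ℤ) ∣ ν * a j - b j := by
    intro j
    have hdd : (g:ℤ) ∣ -(p' * (a 0 * b j - a j * b 0)) - q' * (a 1 * b j - a j * b 1)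
        - r' * (a 2 * b j - a j * b 2) :=
      dvd_sub (dvd_sub (dvd_neg.mpr ((gg_dvd_minor a b 0 j).mul_left p'))
        ((gg_dvd_minor a b 1 j).mul_left q')) ((gg_dvd_minor a b 2 j).mul_left r')
    have e : ν * a j - b j = -(p' * (a 0 * b j - a j * b 0)) - q' * (a 1 * b j - a j * b 1)
        - r' * (a 2 * b j - a j * b 2) := by
      rw [hν]; linear_combination (b j) * hpqr'
    rw [e]; exact hdd
  -- the condition on (k, l)
  have hkl_fwd : ∀ k l : ℤ, (∀ j, (g:ℤ) ∣ k * a j + l * b j) → (g:ℤ) ∣ k + l * ν := by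
    intro k l h
    have e : k + l * ν = p' * (k * a 0 + l * b 0) + q' * (k * a 1 + l * b 1)
        + r' * (k * a 2 + l * b 2) := by
      rw [hν]; linear_combination (-k) * hpqr'
    rw [e]
    exact dvd_add (dvd_add ((h 0).mul_left p') ((h 1).mul_left q')) ((h 2).mul_left r')
  have hkl_bwd : ∀ k l : ℤ, (g:ℤ) ∣ k + l * ν → ∀ j, (g:ℤ) ∣ k * a j + l * b j := by
    intro k l h j
    have e : k * a j + l * b j = (k + l * ν) * a j - l * (ν * a j - b j) := by ring
    rw [e]
    exact dvd_sub (h.mul_right _) ((hν_dvd j).mul_left l)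
  -- the sets
  set S : Set (ℤ × ℤ) := {kl | 0 ≤ kl.1 ∧ kl.1 < (g:ℤ) ∧ 0 ≤ kl.2 ∧ kl.2 < (g:ℤ) ∧
    ∀ j, (g:ℤ) ∣ kl.1 * a j + kl.2 * b j} with hSdef
  set Φ : ℤ × ℤ → (Fin 3 → ℤ) := fun kl => fun j => (kl.1 * a j + kl.2 * b j) / (g:ℤ)
    with hΦ
  -- H2pts = Φ '' S
  have himg : H2pts a b = Φ '' S := by
    ext x
    constructor
    · rintro ⟨s, t, hs0, hs1, ht0, ht1, hxe⟩
      have hcomp : ∀ j : Fin 3, (x j : ℝ) = s * a j + t * b j := by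
        intro j
        have := congrFun hxe j
        simpa [coe3, Pi.add_apply, Pi.smul_apply, smul_eq_mul] using this
      have e0 : ((crossZ x b 0 : ℤ) : ℝ) = s * ((crossZ a b 0 : ℤ) : ℝ) := by
        show ((x 1 * b 2 - x 2 * b 1 : ℤ) : ℝ) = s * ((a 1 * b 2 - a 2 * b 1 : ℤ) : ℝ)
        push_cast; rw [hcomp 1, hcomp 2]; ring
      have e1 : ((crossZ x b 1 : ℤ) : ℝ) = s * ((crossZ a b 1 : ℤ) : ℝ) := by
        show ((x 2 * b 0 - x 0 * b 2 : ℤ) : ℝ) = s * ((a 2 * b 0 - a 0 * b 2 : ℤ) : ℝ)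
        push_cast; rw [hcomp 0, hcomp 2]; ring
      have e2 : ((crossZ x b 2 : ℤ) : ℝ) = s * ((crossZ a b 2 : ℤ) : ℝ) := by
        show ((x 0 * b 1 - x 1 * b 0 : ℤ) : ℝ) = s * ((a 0 * b 1 - a 1 * b 0 : ℤ) : ℝ)
        push_cast; rw [hcomp 0, hcomp 1]; ring
      have f0 : ((crossZ a x 0 : ℤ) : ℝ) = t * ((crossZ a b 0 : ℤ) : ℝ) := by
        show ((a 1 * x 2 - a 2 * x 1 : ℤ) : ℝ) = t * ((a 1 * b 2 - a 2 * b 1 : ℤ) : ℝ)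
        push_cast; rw [hcomp 1, hcomp 2]; ring
      have f1 : ((crossZ a x 1 : ℤ) : ℝ) = t * ((crossZ a b 1 : ℤ) : ℝ) := by
        show ((a 2 * x 0 - a 0 * x 2 : ℤ) : ℝ) = t * ((a 2 * b 0 - a 0 * b 2 : ℤ) : ℝ)
        push_cast; rw [hcomp 0, hcomp 2]; ring
      have f2 : ((crossZ a x 2 : ℤ) : ℝ) = t * ((crossZ a b 2 : ℤ) : ℝ) := by
        show ((a 0 * x 1 - a 1 * x 0 : ℤ) : ℝ) = t * ((a 0 * b 1 - a 1 * b 0 : ℤ) : ℝ)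
        push_cast; rw [hcomp 0, hcomp 1]; ring
      set k : ℤ := p * crossZ x b 0 + q * crossZ x b 1 + r * crossZ x b 2 with hk
      set l : ℤ := p * crossZ a x 0 + q * crossZ a x 1 + r * crossZ a x 2 with hl
      have hkR : (k:ℝ) = s * (g:ℝ) := by
        rw [hk]; push_cast
        rw [e0, e1, e2]; linear_combination s * hpqrR
      have hlR : (l:ℝ) = t * (g:ℝ) := by
        rw [hl]; push_cast
        rw [f0, f1, f2]; linear_combination t * hpqrR
      have hk0 : 0 ≤ k := by
        have : (0:ℝ) ≤ (k:ℝ) := by rw [hkR]; exact mul_nonneg hs0 hgR.le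
        exact_mod_cast this
      have hk1 : k < (g:ℤ) := by
        have : (k:ℝ) < (g:ℝ) := by
          rw [hkR]; nlinarith
        exact_mod_cast this
      have hl0 : 0 ≤ l := by
        have : (0:ℝ) ≤ (l:ℝ) := by rw [hlR]; exact mul_nonneg ht0 hgR.le
        exact_mod_cast this
      have hl1 : l < (g:ℤ) := by
        have : (l:ℝ) < (g:ℝ) := by
          rw [hlR]; nlinarith
        exact_mod_cast this
      have heq : ∀ j : Fin 3, (g:ℤ) * x j = k * a j + l * b j := by
        intro j
        have : ((g:ℤ):ℝ) * (x j : ℝ) = (k:ℝ) * (a j : ℝ) + (l:ℝ) * (b j : ℝ) := by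
          rw [hkR, hlR, hcomp j]; push_cast; ring
        exact_mod_cast this
      refine ⟨(k, l), ⟨hk0, hk1, hl0, hl1, fun j => ⟨x j, (heq j).symm⟩⟩, ?_⟩
      funext j
      show (k * a j + l * b j) / (g:ℤ) = x j
      rw [← heq j, Int.mul_ediv_cancel_left _ hgZ.ne']
    · rintro ⟨⟨k, l⟩, ⟨hk0, hk1, hl0, hl1, hdvd⟩, rfl⟩
      refine ⟨(k:ℝ) / (g:ℝ), (l:ℝ) / (g:ℝ), div_nonneg (by exact_mod_cast hk0) hgR.le,
        (div_lt_one hgR).mpr (by exact_mod_cast hk1),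
        div_nonneg (by exact_mod_cast hl0) hgR.le,
        (div_lt_one hgR).mpr (by exact_mod_cast hl1), ?_⟩
      funext j
      have hE : (g:ℤ) * ((k * a j + l * b j) / (g:ℤ)) = k * a j + l * b j :=
        Int.mul_ediv_cancel' (hdvd j)
      have hER : ((g:ℝ)) * (((k * a j + l * b j) / (g:ℤ) : ℤ) : ℝ)
          = (k:ℝ) * a j + (l:ℝ) * b j := by exact_mod_cast hE
      show (((k * a j + l * b j) / (g:ℤ) : ℤ) : ℝ) = _
      simp only [Pi.add_apply, Pi.smul_apply, smul_eq_mul, coe3]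
      field_simp
      linarith [hER]
  -- Φ is injective on S
  have hinj : Set.InjOn Φ S := by
    rintro ⟨k, l⟩ hkl ⟨k', l'⟩ hkl' heq
    have hnum : ∀ j : Fin 3, k * a j + l * b j = k' * a j + l' * b j := by
      intro j
      have h1 := Int.mul_ediv_cancel' (hkl.2.2.2.2 j)
      have h2 := Int.mul_ediv_cancel' (hkl'.2.2.2.2 j)
      have h3 : (k * a j + l * b j) / (g:ℤ) = (k' * a j + l' * b j) / (g:ℤ) :=
        congrFun heq j
      rw [← h1, ← h2, h3]
    have hzero : ((k - k' : ℤ) : ℝ) • coe3 a + ((l - l' : ℤ) : ℝ) • coe3 b = 0 := by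
      funext j
      have := hnum j
      have hR : (k:ℝ) * a j + (l:ℝ) * b j = (k':ℝ) * a j + (l':ℝ) * b j := by
        exact_mod_cast this
      simp only [Pi.add_apply, Pi.smul_apply, smul_eq_mul, coe3, Pi.zero_apply]
      push_cast
      linarith
    obtain ⟨hfst, hsnd⟩ := LinearIndependent.pair_iff.mp hli _ _ hzero
    have : k = k' := by
      have : (k - k' : ℤ) = 0 := by exact_mod_cast hfst
      omega
    have : l = l' := by
      have : (l - l' : ℤ) = 0 := by exact_mod_cast hsnd
      omega
    simp_all
  -- S is the image of Ico under the explicit parametrization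
  set F : ℤ → ℤ × ℤ := fun l => ((-(l * ν)) % (g:ℤ), l) with hF
  have hSeq : S = F '' Set.Ico (0:ℤ) (g:ℤ) := by
    ext ⟨k, l⟩
    constructor
    · rintro ⟨hk0, hk1, hl0, hl1, hdvd⟩
      refine ⟨l, ⟨hl0, hl1⟩, ?_⟩
      have hc : (g:ℤ) ∣ k + l * ν := hkl_fwd k l hdvd
      have hmod : k % (g:ℤ) = (-(l * ν)) % (g:ℤ) := by
        have : k ≡ -(l * ν) [ZMOD (g:ℤ)] := by
          rw [Int.modEq_iff_dvd]
          have e : -(l * ν) - k = -(k + l * ν) := by ring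
          rw [e]; exact dvd_neg.mpr hc
        exact this
      rw [Int.emod_eq_of_lt hk0 hk1] at hmod
      rw [hF]
      exact Prod.ext hmod.symm rfl
    · rintro ⟨l', ⟨hl0', hl1'⟩, hFl⟩
      have h1 : (-(l' * ν)) % (g:ℤ) = k := congrArg Prod.fst hFl
      have h2 : l' = l := congrArg Prod.snd hFl
      subst h2
      refine ⟨?_, ?_, hl0', hl1', ?_⟩
      · rw [← h1]; exact Int.emod_nonneg _ hgZ.ne'
      · rw [← h1]; exact Int.emod_lt_of_pos _ hgZ
      · apply hkl_bwd
        rw [← h1]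
        have hd : (g:ℤ) ∣ -(l' * ν) - (-(l' * ν)) % (g:ℤ) := Int.dvd_self_sub_of_emod_eq rfl
        have e : (-(l' * ν)) % (g:ℤ) + l' * ν = -((-(l' * ν)) - (-(l' * ν)) % (g:ℤ)) := by
          ring
        rw [e]; exact dvd_neg.mpr hd
  have hFinj : Set.InjOn F (Set.Ico (0:ℤ) (g:ℤ)) := fun x _ y _ h => congrArg Prod.snd h
  calc (H2pts a b).ncard = (Φ '' S).ncard := by rw [himg]
    _ = S.ncard := Set.ncard_image_of_injOn hinj
    _ = (F '' Set.Ico (0:ℤ) (g:ℤ)).ncard := by rw [hSeq]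
    _ = (Set.Ico (0:ℤ) (g:ℤ)).ncard := Set.ncard_image_of_injOn hFinj
    _ = g := by rw [← Finset.coe_Ico, Set.ncard_coe_finset, Int.card_Ico]; simp


/-- Arithmetic: if `a*c ∣ m`, `b*c ∣ m`, `m = a*b*f`, `a,b > 0` then `c ∣ gcd a b * f`. -/
lemma arith_dvd (a b c m f : ℕ) (ha : 0 < a) (hb : 0 < b)
    (h1 : a * c ∣ m) (h2 : b * c ∣ m) (h3 : m = a * b * f) :
    c ∣ Nat.gcd a b * f := by
  have hlcm : Nat.lcm (a*c) (b*c) ∣ m := Nat.lcm_dvd h1 h2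
  rw [Nat.lcm_mul_right] at hlcm
  have hlpos : 0 < Nat.lcm a b := Nat.pos_of_ne_zero (Nat.lcm_ne_zero ha.ne' hb.ne')
  have key : Nat.lcm a b * c ∣ Nat.lcm a b * (Nat.gcd a b * f) := by
    have : Nat.lcm a b * (Nat.gcd a b * f) = m := by
      rw [h3, ← mul_assoc, mul_comm (Nat.lcm a b) (Nat.gcd a b), Nat.gcd_mul_lcm]
    rw [this]; exact hlcm
  exact (mul_dvd_mul_iff_left hlpos.ne').mp key

/-- Extract pairwise linear independence from a triple. -/
lemma li_pair {x y z : Fin 3 → ℝ} (h : LinearIndependent ℝ ![x, y, z]) :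
    LinearIndependent ℝ ![x, y] ∧ LinearIndependent ℝ ![x, z] ∧
      LinearIndependent ℝ ![y, z] := by
  refine ⟨?_, ?_, ?_⟩
  · have := h.comp (![0, 1] : Fin 2 → Fin 3) (by decide)
    convert this using 1; funext i; fin_cases i <;> rfl
  · have := h.comp (![0, 2] : Fin 2 → Fin 3) (by decide)
    convert this using 1; funext i; fin_cases i <;> rfl
  · have := h.comp (![1, 2] : Fin 2 → Fin 3) (by decide)
    convert this using 1; funext i; fin_cases i <;> rfl

/-- Write `μ = μ₁μ₂φ₃` with `φ₃` a positive integer (possible since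
`μ₁μ₂ ∣ μ`).  Then `gcd(μ₁,μ₂) ∣ μ₃` and `μ₃ ∣ gcd(μ₁,μ₂)·φ₃`; consequently
`gcd(μ₁,μ₂,μ₃) = gcd(μ₁,μ₂)`.  The same holds for the other two combinations of two out of the
three multiplicities `μ₁, μ₂, μ₃`. -/
theorem gcd_divisibility_relations (w₁ w₂ w₃ : Fin 3 → ℤ)
    (hnn₁ : ∀ i, 0 ≤ w₁ i) (hnn₂ : ∀ i, 0 ≤ w₂ i) (hnn₃ : ∀ i, 0 ≤ w₃ i)
    (hp₁ : IsPrimitive w₁) (hp₂ : IsPrimitive w₂) (hp₃ : IsPrimitive w₃)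
    (hli : LinearIndependent ℝ ![coe3 w₁, coe3 w₂, coe3 w₃])
    (μ μ₁ μ₂ μ₃ : ℕ)
    (hμ : μ = (H3pts w₁ w₂ w₃).ncard)
    (hμ₁ : μ₁ = (H2pts w₂ w₃).ncard) (hμ₂ : μ₂ = (H2pts w₁ w₃).ncard)
    (hμ₃ : μ₃ = (H2pts w₁ w₂).ncard)
    (φ₁ φ₂ φ₃ : ℕ) (hφ₁pos : 0 < φ₁) (hφ₂pos : 0 < φ₂) (hφ₃pos : 0 < φ₃)
    (hφ₁ : μ = μ₂ * μ₃ * φ₁) (hφ₂ : μ = μ₁ * μ₃ * φ₂) (hφ₃ : μ = μ₁ * μ₂ * φ₃) :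
    (Nat.gcd μ₁ μ₂ ∣ μ₃ ∧ μ₃ ∣ Nat.gcd μ₁ μ₂ * φ₃ ∧
      Nat.gcd (Nat.gcd μ₁ μ₂) μ₃ = Nat.gcd μ₁ μ₂) ∧
    (Nat.gcd μ₁ μ₃ ∣ μ₂ ∧ μ₂ ∣ Nat.gcd μ₁ μ₃ * φ₂ ∧
      Nat.gcd (Nat.gcd μ₁ μ₃) μ₂ = Nat.gcd μ₁ μ₃) ∧
    (Nat.gcd μ₂ μ₃ ∣ μ₁ ∧ μ₁ ∣ Nat.gcd μ₂ μ₃ * φ₁ ∧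
      Nat.gcd (Nat.gcd μ₂ μ₃) μ₁ = Nat.gcd μ₂ μ₃) := by
  obtain ⟨h12, h13, h23⟩ := li_pair hli
  have e₁ : μ₁ = gg w₂ w₃ := by rw [hμ₁, ncard_H2pts _ _ hp₂ h23]
  have e₂ : μ₂ = gg w₁ w₃ := by rw [hμ₂, ncard_H2pts _ _ hp₁ h13]
  have e₃ : μ₃ = gg w₁ w₂ := by rw [hμ₃, ncard_H2pts _ _ hp₁ h12]
  have pos₁ : 0 < μ₁ := e₁ ▸ gg_pos _ _ hp₂ h23
  have pos₂ : 0 < μ₂ := e₂ ▸ gg_pos _ _ hp₁ h13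
  have pos₃ : 0 < μ₃ := e₃ ▸ gg_pos _ _ hp₁ h12
  -- divisibility of each μᵢ's value into the corresponding minors
  have m₁ : ∀ i j, (μ₁:ℤ) ∣ w₂ i * w₃ j - w₂ j * w₃ i := by
    intro i j; rw [e₁]; exact gg_dvd_minor w₂ w₃ i j
  have m₂ : ∀ i j, (μ₂:ℤ) ∣ w₁ i * w₃ j - w₁ j * w₃ i := by
    intro i j; rw [e₂]; exact gg_dvd_minor w₁ w₃ i j
  have m₃ : ∀ i j, (μ₃:ℤ) ∣ w₁ i * w₂ j - w₁ j * w₂ i := by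
    intro i j; rw [e₃]; exact gg_dvd_minor w₁ w₂ i j
  -- first combination: gcd μ₁ μ₂ ∣ μ₃
  have d₁ : Nat.gcd μ₁ μ₂ ∣ μ₃ := by
    have hA : ∀ i j, ((Nat.gcd μ₁ μ₂ : ℕ):ℤ) ∣ w₁ i * w₃ j - w₁ j * w₃ i := fun i j =>
      dvd_trans (Int.natCast_dvd_natCast.mpr (Nat.gcd_dvd_right μ₁ μ₂)) (m₂ i j)
    have hB : ∀ i j, ((Nat.gcd μ₁ μ₂ : ℕ):ℤ) ∣ w₂ i * w₃ j - w₂ j * w₃ i := fun i j =>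
      dvd_trans (Int.natCast_dvd_natCast.mpr (Nat.gcd_dvd_left μ₁ μ₂)) (m₁ i j)
    have ht := minor_transfer w₁ w₂ w₃ hp₃ _ hA hB
    have : ((Nat.gcd μ₁ μ₂ : ℕ):ℤ) ∣ ((gg w₁ w₂ : ℕ):ℤ) :=
      Int.dvd_coe_gcd (ht 1 2) (Int.dvd_coe_gcd (ht 2 0) (ht 0 1))
    rw [e₃]
    exact_mod_cast this
  -- second combination: gcd μ₁ μ₃ ∣ μ₂  (common vector w₂)
  have d₂ : Nat.gcd μ₁ μ₃ ∣ μ₂ := by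
    have hA : ∀ i j, ((Nat.gcd μ₁ μ₃ : ℕ):ℤ) ∣ w₁ i * w₂ j - w₁ j * w₂ i := fun i j =>
      dvd_trans (Int.natCast_dvd_natCast.mpr (Nat.gcd_dvd_right μ₁ μ₃)) (m₃ i j)
    have hB : ∀ i j, ((Nat.gcd μ₁ μ₃ : ℕ):ℤ) ∣ w₃ i * w₂ j - w₃ j * w₂ i := by
      intro i j
      have := dvd_trans (Int.natCast_dvd_natCast.mpr (Nat.gcd_dvd_left μ₁ μ₃)) (m₁ j i)
      have e : w₃ i * w₂ j - w₃ j * w₂ i = w₂ j * w₃ i - w₂ i * w₃ j := by ring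
      rw [e]; exact this
    have ht := minor_transfer w₁ w₃ w₂ hp₂ _ hA hB
    have : ((Nat.gcd μ₁ μ₃ : ℕ):ℤ) ∣ ((gg w₁ w₃ : ℕ):ℤ) :=
      Int.dvd_coe_gcd (ht 1 2) (Int.dvd_coe_gcd (ht 2 0) (ht 0 1))
    rw [e₂]
    exact_mod_cast this
  -- third combination: gcd μ₂ μ₃ ∣ μ₁  (common vector w₁)
  have d₃ : Nat.gcd μ₂ μ₃ ∣ μ₁ := by
    have hA : ∀ i j, ((Nat.gcd μ₂ μ₃ : ℕ):ℤ) ∣ w₂ i * w₁ j - w₂ j * w₁ i := by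
      intro i j
      have := dvd_trans (Int.natCast_dvd_natCast.mpr (Nat.gcd_dvd_right μ₂ μ₃)) (m₃ j i)
      have e : w₂ i * w₁ j - w₂ j * w₁ i = w₁ j * w₂ i - w₁ i * w₂ j := by ring
      rw [e]; exact this
    have hB : ∀ i j, ((Nat.gcd μ₂ μ₃ : ℕ):ℤ) ∣ w₃ i * w₁ j - w₃ j * w₁ i := by
      intro i j
      have := dvd_trans (Int.natCast_dvd_natCast.mpr (Nat.gcd_dvd_left μ₂ μ₃)) (m₂ j i)
      have e : w₃ i * w₁ j - w₃ j * w₁ i = w₁ j * w₃ i - w₁ i * w₃ j := by ring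
      rw [e]; exact this
    have ht := minor_transfer w₂ w₃ w₁ hp₁ _ hA hB
    have : ((Nat.gcd μ₂ μ₃ : ℕ):ℤ) ∣ ((gg w₂ w₃ : ℕ):ℤ) :=
      Int.dvd_coe_gcd (ht 1 2) (Int.dvd_coe_gcd (ht 2 0) (ht 0 1))
    rw [e₁]
    exact_mod_cast this
  refine ⟨⟨d₁, ?_, Nat.gcd_eq_left d₁⟩, ⟨d₂, ?_, Nat.gcd_eq_left d₂⟩,
    ⟨d₃, ?_, Nat.gcd_eq_left d₃⟩⟩
  · exact arith_dvd μ₁ μ₂ μ₃ μ φ₃ pos₁ pos₂ ⟨φ₂, hφ₂⟩ ⟨φ₁, hφ₁⟩ hφ₃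
  · exact arith_dvd μ₁ μ₃ μ₂ μ φ₂ pos₁ pos₃ ⟨φ₃, hφ₃⟩
      ⟨φ₁, by rw [hφ₁]; ring⟩ hφ₂
  · exact arith_dvd μ₂ μ₃ μ₁ μ φ₁ pos₂ pos₃ ⟨φ₃, by rw [hφ₃]; ring⟩
      ⟨φ₂, by rw [hφ₂]; ring⟩ hφ₁

end
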